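/- Let X be an alphabet with n ≥ 2 letters, let g: X* → X* be a growing morphism, and let w ∈ X*. Then F₃({g^i(w) : i ≥ 0}) = F₃({g^i(w) : i = 0, 1, …, 2n²+2n−3}). -/

import Mathlib

open Filter Set

variable {X : Type*}

/-- Apply the morphism with letter images `g` to a word. -/
def applyM (g : X → List X) (w : List X) : List X := w.flatMap g

/-- `iterM g k w` is `g^k(w)`. -/
def iterM (g : X → List X) (k : ℕ) (w : List X) : List X := (applyM g)^[k] w

/-- The letter map of the composition `g ∘ h` (first `h`, then `g`). -/
def compM (g h : X → List X) : X → List X := fun a => applyM g (h a)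

/-- The letter map of the power `g^k`. -/
def powM (g : X → List X) (k : ℕ) : X → List X := fun a => iterM g k [a]

/-- A morphism is primitive if some power maps every letter to a word containing every letter. -/
def Primitive (g : X → List X) : Prop := ∃ k : ℕ, 0 < k ∧ ∀ a b : X, a ∈ iterM g k [b]

/-- `Mg g` is the maximal length of the image of a letter. -/
def Mg [Fintype X] (g : X → List X) : ℕ := Finset.univ.sup fun x => (g x).length

/-- A morphism is growing if the lengths of iterated images of every letter tend to infinity. -/
def Growing (g : X → List X) : Prop :=
  ∀ x : X, Tendsto (fun i => (iterM g i [x]).length) atTop atTop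

/-- `w` is a (finite) prefix of the infinite word `s`. -/
def IsPrefI (w : List X) (s : ℕ → X) : Prop := ∀ i (h : i < w.length), w[i]'h = s i

/-- `v` is a factor of the infinite word `s`. -/
def IsFactorI (v : List X) (s : ℕ → X) : Prop :=
  ∃ j : ℕ, ∀ i (h : i < v.length), v[i]'h = s (j + i)

/-- `g^ω(x)` exists. -/
def OmegaExists (g : X → List X) (x : X) : Prop :=
  [x] <+: g x ∧ Tendsto (fun i => (iterM g i [x]).length) atTop atTop

/-- `s = g^ω(x)`. -/
def IsOmega (g : X → List X) (x : X) (s : ℕ → X) : Prop :=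
  OmegaExists g x ∧ ∀ i : ℕ, IsPrefI (iterM g i [x]) s

/-- `s = u^ω` for the nonempty word `u`. -/
def IsPeriodicWord (s : ℕ → X) (u : List X) : Prop :=
  u ≠ [] ∧ ∀ (i : ℕ) (h : i % u.length < u.length), s i = u[i % u.length]'h

/-- A morphism is looping. -/
def Looping (g : X → List X) : Prop :=
  ∃ k : ℕ, 0 < k ∧ ∃ x : X, ∃ u : List X, ∃ s : ℕ → X,
    IsOmega (powM g k) x s ∧ IsPeriodicWord s u

/-- A morphism is loop-free if it is not looping. -/
def LoopFree (g : X → List X) : Prop := ¬ Looping g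

/-- `p` is a period of `u`. -/
def HasPeriod (u : List X) (p : ℕ) : Prop :=
  0 < p ∧ ∀ i : ℕ, i + p < u.length → u[i + p]? = u[i]?

/-- The smallest period of `u`. -/
noncomputable def PER (u : List X) : ℕ := sInf {p | HasPeriod u p}

/-- A primitive word: nonempty and not a proper power of a shorter word. -/
def PrimitiveWord (u : List X) : Prop :=
  u ≠ [] ∧ ¬∃ (v : List X) (j : ℕ), 2 ≤ j ∧ v.length < u.length ∧
    u = (List.replicate j v).flatten

/-- `COMP g h` : the set of words whose images under `g` and `h` are prefix-comparable. -/
def COMP (g h : X → List X) : Set (List X) :=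
  {w | ∃ u₁ u₂ : List X, applyM g w ++ u₁ = applyM h w ++ u₂}

/-- `BAL g h`. -/
noncomputable def BAL (g h : X → List X) : ℕ∞ :=
  ⨆ (x : X) (k : ℕ),
    ((((applyM g (iterM g k [x])).length : ℤ) -
      ((applyM h (iterM g k [x])).length : ℤ)).natAbs : ℕ∞)

/-- The set of factors of length `q` of the word `w`. -/
def Fq (q : ℕ) (w : List X) : Set (List X) := {v | v.length = q ∧ v <:+: w}

/-- The set of factors of length `q` of words of `L`. -/
def FqL (q : ℕ) (L : Set (List X)) : Set (List X) := ⋃ w ∈ L, Fq q w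

/-- `A n = ⌊9 n³ √(n log n)⌋`. -/
noncomputable def Abound (n : ℕ) : ℕ := ⌊9 * (n : ℝ)^3 * Real.sqrt (n * Real.log n)⌋₊
/-! ### Auxiliary lemmas for `factors_three_iterates_eq` -/

section Aux

open List

lemma applyM_append' (g : X → List X) (u v : List X) :
    applyM g (u ++ v) = applyM g u ++ applyM g v := List.flatMap_append

lemma applyM_singleton' (g : X → List X) (a : X) : applyM g [a] = g a := by
  simp [applyM]

lemma applyM_nil' (g : X → List X) : applyM g [] = [] := rfl

lemma iterM_succ_out (g : X → List X) (k : ℕ) (u : List X) :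
    iterM g (k + 1) u = applyM g (iterM g k u) := Function.iterate_succ_apply' _ _ _

lemma iterM_succ_in (g : X → List X) (k : ℕ) (u : List X) :
    iterM g (k + 1) u = iterM g k (applyM g u) := Function.iterate_succ_apply _ _ _

lemma iterM_add' (g : X → List X) (m k : ℕ) (u : List X) :
    iterM g (m + k) u = iterM g m (iterM g k u) := Function.iterate_add_apply _ _ _ _

lemma iterM_zero' (g : X → List X) (u : List X) : iterM g 0 u = u := rfl

lemma iterM_nil' (g : X → List X) (k : ℕ) : iterM g k ([] : List X) = [] := by
  induction k with
  | zero => rfl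
  | succ k ih => rw [iterM_succ_in]; exact ih

lemma iterM_append' (g : X → List X) (k : ℕ) (u v : List X) :
    iterM g k (u ++ v) = iterM g k u ++ iterM g k v := by
  induction k generalizing u v with
  | zero => rfl
  | succ k ih => rw [iterM_succ_in, iterM_succ_in, iterM_succ_in, applyM_append', ih]

lemma mem_applyM' {g : X → List X} {c : X} {u : List X} :
    c ∈ applyM g u ↔ ∃ b ∈ u, c ∈ g b := List.mem_flatMap

lemma mem_iterM' {g : X → List X} {k : ℕ} {c : X} {u : List X} :
    c ∈ iterM g k u ↔ ∃ b ∈ u, c ∈ iterM g k [b] := by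
  induction k generalizing u with
  | zero => simp [_root_.iterM]
  | succ k ih =>
    rw [iterM_succ_in]
    constructor
    · intro h
      rcases ih.mp h with ⟨d, hd, hc⟩
      rcases mem_applyM'.mp hd with ⟨b, hb, hdb⟩
      refine ⟨b, hb, ?_⟩
      rw [iterM_succ_in, applyM_singleton']
      exact ih.mpr ⟨d, hdb, hc⟩
    · rintro ⟨b, hb, hc⟩
      rw [iterM_succ_in, applyM_singleton'] at hc
      rcases ih.mp hc with ⟨d, hd, hc⟩
      exact ih.mpr ⟨d, mem_applyM'.mpr ⟨b, hb, hd⟩, hc⟩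

lemma applyM_infix' {g : X → List X} {u' u : List X} (h : u' <:+: u) :
    applyM g u' <:+: applyM g u := by
  obtain ⟨s, t, rfl⟩ := h
  exact ⟨applyM g s, applyM g t, by rw [← applyM_append', ← applyM_append']⟩

lemma infix_singleton_iff {a : X} {l : List X} : [a] <:+: l ↔ a ∈ l := by
  constructor
  · intro h; exact h.subset (by simp)
  · intro h
    obtain ⟨s, t, rfl⟩ := List.mem_iff_append.mp h
    exact ⟨s, t, by simp⟩

lemma g_apply_infix_of_mem {g : X → List X} {a : X} {u : List X} (h : a ∈ u) :
    g a <:+: applyM g u := by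
  have := applyM_infix' (g := g) (infix_singleton_iff.mpr h)
  rwa [applyM_singleton'] at this

/-- `g` applied to nonempty letters is nonempty. -/
lemma growing_ne_nil {g : X → List X} (hg : Growing g) (x : X) : g x ≠ [] := by
  intro h
  have h1 : ∀ i, iterM g (i + 1) [x] = [] := by
    intro i
    rw [iterM_succ_in, applyM_singleton', h, iterM_nil']
  have h2 := ((hg x).eventually_ge_atTop 1).and (Filter.eventually_ge_atTop 1)
  obtain ⟨i, hi1, hi2⟩ := h2.exists
  have : i = (i - 1) + 1 := by omega
  rw [this, h1] at hi1
  simp at hi1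

lemma applyM_ne_nil {g : X → List X} (hne : ∀ x, g x ≠ []) {u : List X} (hu : u ≠ []) :
    applyM g u ≠ [] := by
  rcases u with _ | ⟨a, u⟩
  · exact absurd rfl hu
  · have : applyM g (a :: u) = g a ++ applyM g u := by simp [applyM]
    rw [this]
    simp [hne a]

lemma iterM_ne_nil {g : X → List X} (hne : ∀ x, g x ≠ []) {u : List X} (hu : u ≠ []) (k : ℕ) :
    iterM g k u ≠ [] := by
  induction k with
  | zero => exact hu
  | succ k ih => rw [iterM_succ_out]; exact applyM_ne_nil hne ih

lemma length_applyM_ge {g : X → List X} (hne : ∀ x, g x ≠ []) (u : List X) :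
    u.length ≤ (applyM g u).length := by
  induction u with
  | nil => simp
  | cons a u ih =>
    have h1 : applyM g (a :: u) = g a ++ applyM g u := by simp [applyM]
    have h2 : 1 ≤ (g a).length := List.length_pos_iff.mpr (hne a)
    rw [h1, List.length_append]
    simp only [List.length_cons]
    omega

lemma length_iterM_mono {g : X → List X} (hne : ∀ x, g x ≠ []) (u : List X) {i j : ℕ}
    (hij : i ≤ j) : (iterM g i u).length ≤ (iterM g j u).length := by
  obtain ⟨k, rfl⟩ := Nat.exists_eq_add_of_le hij
  clear hij
  induction k with
  | zero => simp
  | succ k ih =>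
    have : i + (k + 1) = (i + k) + 1 := by omega
    rw [this, iterM_succ_out]
    exact le_trans ih (length_applyM_ge hne _)

/-- Orbit of a point under a function on a finite type revisits with small index. -/
lemma orbit_small {Y : Type*} [Fintype Y] (F : Y → Y) (q : Y) (m : ℕ) :
    ∃ m', m' ≤ m ∧ m' ≤ Fintype.card Y - 1 ∧ F^[m'] q = F^[m] q := by
  set N := Fintype.card Y with hN
  obtain ⟨s, t, hst, heq⟩ := Fintype.exists_ne_map_eq_of_card_lt
    (fun r : Fin (N + 1) => F^[(r : ℕ)] q) (by simp [hN])
  obtain ⟨s', t', hlt, hle, heq'⟩ : ∃ s' t' : ℕ, s' < t' ∧ t' ≤ N ∧ F^[s'] q = F^[t'] q := by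
    rcases (Fin.val_ne_of_ne hst).lt_or_gt with hc | hc
    · exact ⟨s, t, hc, Nat.lt_succ_iff.mp t.2, heq⟩
    · exact ⟨t, s, hc, Nat.lt_succ_iff.mp s.2, heq.symm⟩
  induction m using Nat.strong_induction_on with
  | _ m ih =>
    by_cases hm : m < t'
    · exact ⟨m, le_rfl, by omega, rfl⟩
    · have key : F^[m] q = F^[m - t' + s'] q := by
        calc F^[m] q = F^[(m - t') + t'] q := by congr 1; omega
          _ = F^[m - t'] (F^[t'] q) := Function.iterate_add_apply _ _ _ _
          _ = F^[m - t'] (F^[s'] q) := by rw [heq']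
          _ = F^[m - t' + s'] q := (Function.iterate_add_apply _ _ _ _).symm
      obtain ⟨m', h1, h2, h3⟩ := ih (m - t' + s') (by omega)
      exact ⟨m', by omega, h2, by rw [h3, ← key]⟩

/-- Every letter of `g^m(w)` occurs already in `g^{m'}(w)` for some `m' ≤ card X - 1`. -/
lemma letter_descend [Fintype X] {g : X → List X} (w : List X) :
    ∀ m a, a ∈ iterM g m w → ∃ m', m' ≤ m ∧ m' ≤ Fintype.card X - 1 ∧ a ∈ iterM g m' w := by
  intro m
  induction m using Nat.strong_induction_on with
  | _ m ih =>
    intro a ha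
    by_cases hm : m ≤ Fintype.card X - 1
    · exact ⟨m, le_rfl, hm, ha⟩
    · set N := Fintype.card X with hN
      have hN1 : 1 ≤ N := Fintype.card_pos_iff.mpr ⟨a⟩
      have hmN : N ≤ m := by omega
      have chain : ∀ r, r ≤ m → ∃ b, b ∈ iterM g (m - r) w ∧ a ∈ iterM g r [b] := by
        intro r
        induction r with
        | zero => intro _; exact ⟨a, by simpa using ha, by simp [_root_.iterM]⟩
        | succ r ihr =>
          intro hrm
          obtain ⟨b, hb, hab⟩ := ihr (by omega)
          have he : m - r = (m - (r + 1)) + 1 := by omega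
          rw [he, iterM_succ_out] at hb
          obtain ⟨c, hc, hbc⟩ := mem_applyM'.mp hb
          refine ⟨c, hc, ?_⟩
          rw [iterM_succ_in, applyM_singleton']
          exact mem_iterM'.mpr ⟨b, hbc, hab⟩
      choose b hb1 hb2 using chain
      have hle : ∀ r : Fin (N + 1), (r : ℕ) ≤ m := fun r => le_trans (Nat.lt_succ_iff.mp r.2) hmN
      obtain ⟨s, t, hst, heq⟩ := Fintype.exists_ne_map_eq_of_card_lt
        (fun r : Fin (N + 1) => b (r : ℕ) (hle r)) (by simp [hN])
      have key : ∀ (s t : Fin (N + 1)), (s : ℕ) < (t : ℕ) →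
          b (s : ℕ) (hle s) = b (t : ℕ) (hle t) → ∃ m₂, m₂ < m ∧ a ∈ iterM g m₂ w := by
        intro s t hlt hbeq
        refine ⟨(s : ℕ) + (m - (t : ℕ)), by have := hle t; omega, ?_⟩
        rw [iterM_add']
        refine mem_iterM'.mpr ⟨b (t : ℕ) (hle t), hb1 (t : ℕ) (hle t), ?_⟩
        rw [← hbeq]
        exact hb2 (s : ℕ) (hle s)
      have hsplice : ∃ m₂, m₂ < m ∧ a ∈ iterM g m₂ w := by
        rcases (Fin.val_ne_of_ne hst).lt_or_gt with hc | hc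
        · exact key s t hc heq
        · exact key t s hc heq.symm
      obtain ⟨m₂, hm₂, ha₂⟩ := hsplice
      obtain ⟨m', h1, h2, h3⟩ := ih m₂ hm₂ a ha₂
      exact ⟨m', by omega, h2, h3⟩

/-- Growth: after `card X` steps every letter image has length at least 2. -/
lemma two_le_length_iterM_card [Fintype X] {g : X → List X} (hg : Growing g) (a : X) :
    2 ≤ (iterM g (Fintype.card X) [a]).length := by
  set N := Fintype.card X with hN
  by_contra hcon
  push_neg at hcon
  have hne : ∀ x, g x ≠ [] := growing_ne_nil hg
  have hlen1 : ∀ r, r ≤ N → (iterM g r [a]).length = 1 := by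
    intro r hr
    have h1 : 1 ≤ (iterM g r [a]).length :=
      List.length_pos_iff.mpr (iterM_ne_nil hne (by simp) r)
    have h2 := length_iterM_mono hne [a] hr
    omega
  have hsing : ∀ r, r ≤ N → ∃ c, iterM g r [a] = [c] := by
    intro r hr
    exact List.length_eq_one_iff.mp (hlen1 r hr)
  choose c hc using hsing
  have hle : ∀ r : Fin (N + 1), (r : ℕ) ≤ N := fun r => Nat.lt_succ_iff.mp r.2
  obtain ⟨s, t, hst, heq⟩ := Fintype.exists_ne_map_eq_of_card_lt
    (fun r : Fin (N + 1) => c (r : ℕ) (hle r)) (by simp [hN])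
  have key : ∀ (s t : Fin (N + 1)), (s : ℕ) < (t : ℕ) →
      c (s : ℕ) (hle s) = c (t : ℕ) (hle t) → False := by
    intro s t hlt hceq
    set e := c (t : ℕ) (hle t) with he
    have hfix : iterM g ((t : ℕ) - (s : ℕ)) [e] = [e] := by
      have h1 : iterM g (t : ℕ) [a] = [e] := hc (t : ℕ) (hle t)
      have h2 : iterM g (s : ℕ) [a] = [e] := by rw [hc (s : ℕ) (hle s), hceq]
      calc iterM g ((t : ℕ) - (s : ℕ)) [e]
          = iterM g ((t : ℕ) - (s : ℕ)) (iterM g (s : ℕ) [a]) := by rw [h2]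
        _ = iterM g ((t : ℕ) - (s : ℕ) + (s : ℕ)) [a] := (iterM_add' _ _ _ _).symm
        _ = iterM g (t : ℕ) [a] := by congr 1; omega
        _ = [e] := h1
    set p := (t : ℕ) - (s : ℕ) with hp
    have hp1 : 1 ≤ p := by omega
    have hiter : ∀ k, iterM g (k * p) [e] = [e] := by
      intro k
      induction k with
      | zero => rw [Nat.zero_mul]; rfl
      | succ k ih =>
        have : (k + 1) * p = k * p + p := by ring
        rw [this, iterM_add', hfix, ih]
    obtain ⟨M, hM⟩ := Filter.eventually_atTop.mp ((hg e).eventually_ge_atTop 2)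
    have h2 := hM (M * p + p) (by nlinarith)
    have : (M + 1) * p = M * p + p := by ring
    rw [← this, hiter (M + 1)] at h2
    simp at h2
  rcases (Fin.val_ne_of_ne hst).lt_or_gt with hc' | hc'
  · exact key s t hc' heq
  · exact key t s hc' heq.symm

end Aux
section Aux2

open List

lemma prefix_append_cases {v A B : List X} (h : v <+: A ++ B) :
    v <+: A ∨ ∃ v₂, v = A ++ v₂ ∧ v₂ <+: B := by
  by_cases hl : v.length ≤ A.length
  · exact Or.inl (List.prefix_of_prefix_length_le h (A.prefix_append B) hl)
  · right
    have hA : A <+: v := List.prefix_of_prefix_length_le (A.prefix_append B) h (by omega)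
    obtain ⟨v₂, rfl⟩ := hA
    exact ⟨v₂, rfl, (List.prefix_append_right_inj A).mp h⟩

lemma infix_append_cases {v A B : List X} (h : v <:+: A ++ B) :
    v <:+: A ∨ v <:+: B ∨
      ∃ v₁ v₂, v = v₁ ++ v₂ ∧ v₁ ≠ [] ∧ v₂ ≠ [] ∧ v₁ <:+ A ∧ v₂ <+: B := by
  obtain ⟨t₁, t₂, he⟩ := h
  by_cases h1 : t₁.length + v.length ≤ A.length
  · left
    have hp : t₁ ++ v <+: A := by
      apply List.prefix_of_prefix_length_le _ (A.prefix_append B)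
        (by simp only [List.length_append]; omega)
      exact ⟨t₂, by simpa [List.append_assoc] using he⟩
    have hvt : v <:+: t₁ ++ v := ⟨t₁, [], by simp⟩
    exact hvt.trans hp.isInfix
  · by_cases h2 : A.length ≤ t₁.length
    · right; left
      have hA : A <+: t₁ := List.prefix_of_prefix_length_le (A.prefix_append B)
        ⟨v ++ t₂, by simpa [List.append_assoc] using he⟩ h2
      obtain ⟨t₁', rfl⟩ := hA
      have hB : t₁' ++ v ++ t₂ = B := by
        apply List.append_cancel_left (as := A)
        simpa [List.append_assoc] using he
      exact ⟨t₁', t₂, hB⟩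
    · right; right
      set k := A.length - t₁.length with hk
      have hk1 : 0 < k := by omega
      have hk2 : k < v.length := by omega
      have hlt : (v.take k).length = k := by rw [List.length_take]; omega
      have hassoc : t₁ ++ v.take k ++ (v.drop k ++ t₂) = A ++ B := by
        simp only [← List.append_assoc]
        rw [List.append_assoc t₁ (v.take k) (v.drop k), List.take_append_drop]
        exact he
      have hpre : t₁ ++ v.take k <+: A ++ B := ⟨v.drop k ++ t₂, hassoc⟩
      have htA : t₁ ++ v.take k = A := by
        apply List.IsPrefix.eq_of_length
        · exact List.prefix_of_prefix_length_le hpre (A.prefix_append B)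
            (by simp only [List.length_append]; omega)
        · simp only [List.length_append]; omega
      refine ⟨v.take k, v.drop k, (v.take_append_drop k).symm,
        ?_, ?_, ⟨t₁, htA⟩, ⟨t₂, ?_⟩⟩
      · intro hnil; rw [hnil] at hlt; simp at hlt; omega
      · intro hnil
        have := congrArg List.length hnil
        simp only [List.length_drop, List.length_nil] at this
        omega
      · have h' := hassoc
        rw [htA] at h'
        exact List.append_cancel_left h'

lemma window_prefix {f : X → List X} {s : ℕ} (hs : 1 ≤ s) (hlenf : ∀ x, s ≤ (f x).length) :
    ∀ (u v : List X), v ≠ [] → v <+: applyM f u →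
      ∃ u', u' <+: u ∧ v <+: applyM f u' ∧ u'.length * s + 1 ≤ v.length + s := by
  intro u
  induction u with
  | nil =>
    intro v hv hp
    rw [applyM_nil'] at hp
    exact absurd (List.prefix_nil.mp hp) hv
  | cons a u₂ ih =>
    intro v hv hp
    have hsplit : applyM f (a :: u₂) = f a ++ applyM f u₂ := by simp [applyM]
    rw [hsplit] at hp
    have hv1 : 1 ≤ v.length := List.length_pos_iff.mpr hv
    rcases prefix_append_cases hp with hva | ⟨v₂, rfl, hv₂⟩
    · refine ⟨[a], ⟨u₂, rfl⟩, by rwa [applyM_singleton'], ?_⟩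
      simp only [List.length_singleton, one_mul]
      omega
    · by_cases hr : v₂ = []
      · subst hr
        refine ⟨[a], ⟨u₂, rfl⟩, by rw [applyM_singleton']; exact ⟨[], by simp⟩, ?_⟩
        have := hlenf a
        simp only [List.length_singleton, one_mul, List.append_nil, List.length_append]
        omega
      · obtain ⟨u'', hu''p, hu''v, hbound⟩ := ih v₂ hr hv₂
        obtain ⟨tp, rfl⟩ := hu''p
        refine ⟨a :: u'', ⟨tp, rfl⟩, ?_, ?_⟩
        · obtain ⟨tv, htv⟩ := hu''v
          refine ⟨tv, ?_⟩
          have : applyM f (a :: u'') = f a ++ applyM f u'' := by simp [applyM]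
          rw [this, List.append_assoc, htv]
        · have hfa := hlenf a
          simp only [List.length_cons, List.length_append]
          have hmul : (u''.length + 1) * s = u''.length * s + s := by ring
          rw [hmul]
          omega

lemma window_infix {f : X → List X} {s : ℕ} (hs : 1 ≤ s) (hlenf : ∀ x, s ≤ (f x).length) :
    ∀ (u v : List X), v ≠ [] → v <:+: applyM f u →
      ∃ u', u' <:+: u ∧ v <:+: applyM f u' ∧ u'.length * s + 2 ≤ v.length + 2 * s := by
  intro u
  induction u with
  | nil =>
    intro v hv hp
    rw [applyM_nil'] at hp
    exact absurd (List.eq_nil_of_infix_nil hp) hv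
  | cons a u₂ ih =>
    intro v hv hp
    have hsplit : applyM f (a :: u₂) = f a ++ applyM f u₂ := by simp [applyM]
    rw [hsplit] at hp
    have hv1 : 1 ≤ v.length := List.length_pos_iff.mpr hv
    rcases infix_append_cases hp with hva | hvb | ⟨v₁, v₂, rfl, hne₁, hne₂, hsuf, hpre⟩
    · refine ⟨[a], ⟨[], u₂, by simp⟩, by rwa [applyM_singleton'], ?_⟩
      simp only [List.length_singleton, one_mul]
      omega
    · obtain ⟨u', h1, h2, h3⟩ := ih v hv hvb
      exact ⟨u', List.infix_cons h1, h2, h3⟩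
    · obtain ⟨u'', hu''p, hu''v, hbound⟩ := window_prefix hs hlenf u₂ v₂ hne₂ hpre
      obtain ⟨tp, rfl⟩ := hu''p
      refine ⟨a :: u'', ⟨[], tp, by simp⟩, ?_, ?_⟩
      · obtain ⟨x, hx⟩ := hsuf
        obtain ⟨tv, htv⟩ := hu''v
        refine ⟨x, tv, ?_⟩
        have : applyM f (a :: u'') = f a ++ applyM f u'' := by simp [applyM]
        rw [this, ← hx, ← htv]
        simp [List.append_assoc]
      · have h1 : 1 ≤ v₁.length := List.length_pos_iff.mpr hne₁
        simp only [List.length_cons, List.length_append]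
        have hmul : (u''.length + 1) * s = u''.length * s + s := by ring
        rw [hmul]
        omega

end Aux2
section Aux3

open List

/-- The "junction" map on pairs of letters: last letter of `g a`, first letter of `g b`. -/
def Fpair (g : X → List X) : X × X → X × X :=
  fun q => ((g q.1).getLastD q.1, (g q.2).headD q.2)

lemma pair_step {g : X → List X} (hne : ∀ x, g x ≠ []) {a b : X} {u : List X}
    (hab : [a, b] <:+: u) :
    [(Fpair g (a, b)).1, (Fpair g (a, b)).2] <:+: applyM g u := by
  obtain ⟨ℓ, z, hga⟩ := (g a).eq_nil_or_concat.resolve_left (hne a)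
  obtain ⟨c, r, hgb⟩ := List.exists_cons_of_ne_nil (hne b)
  have hF : Fpair g (a, b) = (z, c) := by
    simp [Fpair, hga, hgb, List.concat_eq_append, List.getLastD_concat]
  rw [hF]
  have h1 : [z, c] <:+: g a ++ g b := by
    refine ⟨ℓ, r, ?_⟩
    rw [hga, hgb, List.concat_eq_append]
    simp [List.append_assoc]
  have h2 : g a ++ g b <:+: applyM g u := by
    have h3 : applyM g [a, b] = g a ++ g b := by simp [applyM]
    rw [← h3]
    exact applyM_infix' hab
  exact h1.trans h2

lemma pair_back {g : X → List X} (hne : ∀ x, g x ≠ []) {p₁ p₂ : X} {u : List X}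
    (h : [p₁, p₂] <:+: applyM g u) :
    (∃ a ∈ u, [p₁, p₂] <:+: g a) ∨
      (∃ a b : X, [a, b] <:+: u ∧ Fpair g (a, b) = (p₁, p₂)) := by
  have hlen1 : ∀ x, 1 ≤ (g x).length := fun x => List.length_pos_iff.mpr (hne x)
  obtain ⟨u', hu'u, hvu', hb⟩ := window_infix le_rfl hlen1 u [p₁, p₂] (by simp) h
  have hul : u'.length ≤ 2 := by
    simp only [List.length_cons, List.length_nil, mul_one] at hb
    omega
  rcases u' with _ | ⟨a, _ | ⟨b, _ | ⟨c, rest⟩⟩⟩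
  · rw [applyM_nil'] at hvu'
    exact absurd (List.eq_nil_of_infix_nil hvu') (by simp)
  · rw [applyM_singleton'] at hvu'
    exact Or.inl ⟨a, hu'u.subset (by simp), hvu'⟩
  · have hsplit : applyM g [a, b] = g a ++ g b := by simp [applyM]
    rw [hsplit] at hvu'
    rcases infix_append_cases hvu' with hva | hvb | ⟨v₁, v₂, heq, hne₁, hne₂, hsuf, hpre⟩
    · exact Or.inl ⟨a, hu'u.subset (by simp), hva⟩
    · exact Or.inl ⟨b, hu'u.subset (by simp), hvb⟩
    · right
      have hl : v₁.length + v₂.length = 2 := by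
        have h' := congrArg List.length heq
        simpa using h'.symm
      have hl1 : v₁.length = 1 := by
        have a1 : 1 ≤ v₁.length := List.length_pos_iff.mpr hne₁
        have a2 : 1 ≤ v₂.length := List.length_pos_iff.mpr hne₂
        omega
      have hl2 : v₂.length = 1 := by omega
      obtain ⟨x, hx⟩ := List.length_eq_one_iff.mp hl1
      obtain ⟨y, hy⟩ := List.length_eq_one_iff.mp hl2
      subst hx hy
      have hxy : p₁ = x ∧ p₂ = y := by simpa using heq
      obtain ⟨rfl, rfl⟩ := hxy
      refine ⟨a, b, hu'u, ?_⟩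
      obtain ⟨l₁, hl₁⟩ := hsuf
      obtain ⟨t₁, ht₁⟩ := hpre
      have e1 : (g a).getLastD a = p₁ := by rw [← hl₁]; exact List.getLastD_concat
      have e2 : (g b).headD b = p₂ := by rw [← ht₁]; rfl
      show ((g a).getLastD a, (g b).headD b) = (p₁, p₂)
      rw [e1, e2]
  · exfalso
    simp only [List.length_cons] at hul
    omega

lemma pair_iter {g : X → List X} (hne : ∀ x, g x ≠ []) {w : List X} {q : X × X} {k : ℕ}
    (h : [q.1, q.2] <:+: iterM g k w) (j : ℕ) :
    [((Fpair g)^[j] q).1, ((Fpair g)^[j] q).2] <:+: iterM g (k + j) w := by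
  induction j with
  | zero => simpa using h
  | succ j ih =>
    have he : k + (j + 1) = (k + j) + 1 := by omega
    rw [Function.iterate_succ_apply', he, iterM_succ_out]
    have := pair_step hne (a := ((Fpair g)^[j] q).1) (b := ((Fpair g)^[j] q).2)
      (u := iterM g (k + j) w) ih
    simpa using this

lemma pair_anc {g : X → List X} (hne : ∀ x, g x ≠ []) (w : List X) :
    ∀ m p₁ p₂, [p₁, p₂] <:+: iterM g m w →
      (∃ q : X × X, [q.1, q.2] <:+: w ∧ (Fpair g)^[m] q = (p₁, p₂)) ∨
      (∃ j k : ℕ, ∃ a : X, ∃ q : X × X, j + 1 + k = m ∧ a ∈ iterM g k w ∧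
        [q.1, q.2] <:+: g a ∧ (Fpair g)^[j] q = (p₁, p₂)) := by
  intro m
  induction m with
  | zero => intro p₁ p₂ h; exact Or.inl ⟨(p₁, p₂), h, rfl⟩
  | succ m ih =>
    intro p₁ p₂ h
    rw [iterM_succ_out] at h
    rcases pair_back hne h with ⟨a, ha, hpa⟩ | ⟨a, b, hab, hF⟩
    · exact Or.inr ⟨0, m, a, (p₁, p₂), by omega, ha, hpa, rfl⟩
    · rcases ih a b hab with ⟨q, hq, hFq⟩ | ⟨j, k, a', q, hjk, ha', hq, hFq⟩
      · exact Or.inl ⟨q, hq, by rw [Function.iterate_succ_apply', hFq, hF]⟩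
      · exact Or.inr ⟨j + 1, k, a', q, by omega, ha', hq,
          by rw [Function.iterate_succ_apply', hFq, hF]⟩

lemma pair_descend [Fintype X] {g : X → List X} (hne : ∀ x, g x ≠ []) (w : List X)
    {m : ℕ} {p₁ p₂ : X} (h : [p₁, p₂] <:+: iterM g m w) :
    ∃ m', m' ≤ Fintype.card X * Fintype.card X + Fintype.card X - 1 ∧
      [p₁, p₂] <:+: iterM g m' w := by
  set N := Fintype.card X with hN
  have hN1 : 1 ≤ N := Fintype.card_pos_iff.mpr ⟨p₁⟩
  have hcard : Fintype.card (X × X) = N * N := by rw [Fintype.card_prod]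
  rcases pair_anc hne w m p₁ p₂ h with ⟨q, hq, hFq⟩ | ⟨j, k, a, q, hjk, ha, hq, hFq⟩
  · obtain ⟨m', hm'm, hm'N, hFeq⟩ := orbit_small (Fpair g) q m
    rw [hcard] at hm'N
    have hiter := pair_iter hne (q := q) (k := 0) (by simpa [_root_.iterM] using hq) m'
    rw [hFeq, hFq, Nat.zero_add] at hiter
    exact ⟨m', by omega, hiter⟩
  · obtain ⟨k', hk'k, hk'N, ha'⟩ := letter_descend w k a ha
    have hq' : [q.1, q.2] <:+: iterM g (k' + 1) w := by
      rw [iterM_succ_out]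
      exact hq.trans (g_apply_infix_of_mem ha')
    obtain ⟨j', hj'j, hj'N, hFeq⟩ := orbit_small (Fpair g) q j
    rw [hcard] at hj'N
    have hiter := pair_iter hne hq' j'
    rw [hFeq, hFq] at hiter
    refine ⟨k' + 1 + j', ?_, hiter⟩
    rw [← hN] at hk'N
    obtain ⟨M, hM⟩ : ∃ M, N * N = M := ⟨_, rfl⟩
    rw [hM] at hj'N ⊢
    have : 1 ≤ M := by rw [← hM]; exact Nat.one_le_iff_ne_zero.mpr (by positivity)
    omega

end Aux3
/-- For a growing morphism `g` on an alphabet with `n ≥ 2` letters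
and any word `w`, `F₃({g^i(w) : i ≥ 0}) = F₃({g^i(w) : 0 ≤ i ≤ 2n²+2n-3})`. -/
theorem factors_three_iterates_eq {X : Type*} [Fintype X]
    (n : ℕ) (hn : n = Fintype.card X) (hn2 : 2 ≤ n)
    (g : X → List X) (hg : Growing g) (w : List X) :
    {v | ∃ i : ℕ, v ∈ Fq 3 (iterM g i w)} =
      {v | ∃ i : ℕ, i ≤ 2 * n ^ 2 + 2 * n - 3 ∧ v ∈ Fq 3 (iterM g i w)} := by
  have hnn : n ^ 2 = n * n := sq n
  have h4 : 4 ≤ n * n := Nat.mul_le_mul hn2 hn2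
  ext v
  simp only [Set.mem_setOf_eq]
  constructor
  · rintro ⟨i, hv⟩
    obtain ⟨hlen, hinf⟩ := hv
    by_cases hiB : i ≤ 2 * n ^ 2 + 2 * n - 3
    · exact ⟨i, hiB, hlen, hinf⟩
    · push_neg at hiB
      rw [hnn] at hiB
      have hne : ∀ x, g x ≠ [] := growing_ne_nil hg
      have hni : n ≤ i := by omega
      set f : X → List X := fun a => iterM g n [a] with hf
      have happly : ∀ u : List X, iterM g n u = applyM f u := by
        intro u
        induction u with
        | nil => rw [iterM_nil', applyM_nil']
        | cons a u ih =>
          have h1 : a :: u = [a] ++ u := rfl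
          rw [h1, iterM_append', applyM_append', ih, applyM_singleton']
      set m := i - n with hm
      have hiter : iterM g i w = applyM f (iterM g m w) := by
        have h1 : i = n + m := by omega
        rw [h1, iterM_add', happly]
      have hs : ∀ x, 2 ≤ (f x).length := by
        intro x
        have := two_le_length_iterM_card hg x
        rwa [← hn] at this
      rw [hiter] at hinf
      have hvne : v ≠ [] := by
        intro hnil; rw [hnil] at hlen; simp at hlen
      obtain ⟨u', hu'u, hvu', hbound⟩ :=
        window_infix (by norm_num) hs (iterM g m w) v hvne hinf
      rw [hlen] at hbound
      have hul : u'.length ≤ 2 := by omega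
      rcases u' with _ | ⟨a, _ | ⟨b, _ | ⟨c, rest⟩⟩⟩
      · exfalso
        rw [applyM_nil'] at hvu'
        exact hvne (List.eq_nil_of_infix_nil hvu')
      · -- single letter
        have ha : a ∈ iterM g m w := infix_singleton_iff.mp hu'u
        obtain ⟨m', hm'm, hm'N, ha'⟩ := letter_descend w m a ha
        rw [← hn] at hm'N
        refine ⟨n + m', by omega, hlen, ?_⟩
        rw [iterM_add', happly]
        rw [applyM_singleton'] at hvu'
        have : f a <:+: applyM f (iterM g m' w) := by
          have := applyM_infix' (g := f) (infix_singleton_iff.mpr ha')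
          rwa [applyM_singleton'] at this
        exact hvu'.trans this
      · -- pair of letters
        obtain ⟨m', hm'N, hab'⟩ := pair_descend hne w hu'u
        rw [← hn] at hm'N
        refine ⟨n + m', by omega, hlen, ?_⟩
        rw [iterM_add', happly]
        exact hvu'.trans (applyM_infix' hab')
      · exfalso
        simp only [List.length_cons] at hul
        omega
  · rintro ⟨i, _, hv⟩
    exact ⟨i, hv⟩
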